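/- Let D be a chord diagram and let D' be obtained from D by a weak third move such that exactly one pair of the three distinguished chords crosses in D. Then X(D') = X(D) + 1. (Chord-diagram form of Theorem 2(3): a weak third move changes the cross chord number by exactly 1.) -/

import Mathlib

open scoped Classical

/-- Two chords of a chord diagram on the points `0 < 1 < ⋯ < N-1` (in this cyclic
order) cross if their endpoints interleave. -/
def Crosses {N : ℕ} (c d : Sym2 (Fin N)) : Prop :=
  ∃ a b x y : Fin N, a < x ∧ x < b ∧ b < y ∧
    ((c = s(a, b) ∧ d = s(x, y)) ∨ (c = s(x, y) ∧ d = s(a, b)))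

/-- A chord diagram of order `n`: a partition of the `2n` points `0, 1, …, 2n-1`
(in this cyclic order on a circle) into `n` unordered pairs, the chords. -/
structure ChordDiagram (n : ℕ) where
  chords : Finset (Sym2 (Fin (2 * n)))
  not_diag : ∀ c ∈ chords, ¬ c.IsDiag
  cover : ∀ x : Fin (2 * n), ∃! c, c ∈ chords ∧ x ∈ c

/-- The trivializing number: the minimum number of chords whose deletion yields a
trivial chord diagram (one with no two crossing chords). -/
noncomputable def tr {n : ℕ} (D : ChordDiagram n) : ℕ :=
  sInf {k | ∃ S ⊆ D.chords, S.card = k ∧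
    ∀ c ∈ D.chords \ S, ∀ d ∈ D.chords \ S, ¬ Crosses c d}

/-- The cross chord number: the number of unordered pairs of chords that cross. -/
noncomputable def Xnum {n : ℕ} (D : ChordDiagram n) : ℕ :=
  ((D.chords ×ˢ D.chords).filter fun p => Crosses p.1 p.2).card / 2

/-- Two points are cyclically adjacent on the circle `0, 1, …, N-1`. -/
def Adjacent {N : ℕ} (p q : Fin N) : Prop :=
  (p.val + 1) % N = q.val ∨ (q.val + 1) % N = p.val

/-- The ternary cyclic-order relation on the points `0, 1, …, N-1`. -/
def CyclicBtw {N : ℕ} (a b c : Fin N) : Prop :=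
  (a < b ∧ b < c) ∨ (b < c ∧ c < a) ∨ (c < a ∧ a < b)

/-- A first move (first flat Reidemeister move): `D'` is obtained from `D` by
adding an isolated chord. -/
def FirstMove {n : ℕ} (D : ChordDiagram n) (D' : ChordDiagram (n + 1)) : Prop :=
  ∃ ι : Fin (2 * n) → Fin (2 * (n + 1)),
    Function.Injective ι ∧
    (∀ a b c, CyclicBtw a b c → CyclicBtw (ι a) (ι b) (ι c)) ∧
    (∀ ch ∈ D.chords, ch.map ι ∈ D'.chords) ∧
    ∃ p q : Fin (2 * (n + 1)), Adjacent p q ∧ s(p, q) ∈ D'.chords ∧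
      ∀ x, x ∉ Set.range ι ↔ (x = p ∨ x = q)

/-- A triple move with distinguished pairs `A = {a₁, a₂}`, `B = {b₁, b₂}`,
`C = {c₁, c₂}` of cyclically adjacent points and distinguished chords
`s(a₁, b₁)`, `s(a₂, c₁)`, `s(b₂, c₂)`: `D'` is obtained from `D` by transposing
the two points of each of `A`, `B`, `C`. -/
def TripleMoveAt {n : ℕ} (D D' : ChordDiagram n)
    (a₁ a₂ b₁ b₂ c₁ c₂ : Fin (2 * n)) : Prop :=
  Adjacent a₁ a₂ ∧ Adjacent b₁ b₂ ∧ Adjacent c₁ c₂ ∧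
  ([a₁, a₂, b₁, b₂, c₁, c₂].Pairwise (· ≠ ·)) ∧
  s(a₁, b₁) ∈ D.chords ∧ s(a₂, c₁) ∈ D.chords ∧ s(b₂, c₂) ∈ D.chords ∧
  D'.chords = D.chords.image
    (Sym2.map (Equiv.swap a₁ a₂ * Equiv.swap b₁ b₂ * Equiv.swap c₁ c₂))

/-- Three chords pairwise cross. -/
def PairwiseCross {N : ℕ} (x y z : Sym2 (Fin N)) : Prop :=
  Crosses x y ∧ Crosses x z ∧ Crosses y z

/-- Exactly one of the three pairs among three chords crosses. -/
def ExactlyOneCross {N : ℕ} (x y z : Sym2 (Fin N)) : Prop :=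
  (Crosses x y ∧ ¬ Crosses x z ∧ ¬ Crosses y z) ∨
  (¬ Crosses x y ∧ Crosses x z ∧ ¬ Crosses y z) ∨
  (¬ Crosses x y ∧ ¬ Crosses x z ∧ Crosses y z)

/-- A strong third move: a triple move whose three distinguished chords pairwise
cross in `D`, or whose three replacement chords pairwise cross in `D'`. -/
def StrongThirdMove {n : ℕ} (D D' : ChordDiagram n) : Prop :=
  ∃ a₁ a₂ b₁ b₂ c₁ c₂, TripleMoveAt D D' a₁ a₂ b₁ b₂ c₁ c₂ ∧
    (PairwiseCross s(a₁, b₁) s(a₂, c₁) s(b₂, c₂) ∨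
     PairwiseCross s(a₂, b₂) s(a₁, c₂) s(b₁, c₁))

/-- A weak third move: a triple move such that exactly one pair of the three
distinguished chords crosses in `D`, or exactly one pair of the three
replacement chords crosses in `D'`. -/
def WeakThirdMove {n : ℕ} (D D' : ChordDiagram n) : Prop :=
  ∃ a₁ a₂ b₁ b₂ c₁ c₂, TripleMoveAt D D' a₁ a₂ b₁ b₂ c₁ c₂ ∧
    (ExactlyOneCross s(a₁, b₁) s(a₂, c₁) s(b₂, c₂) ∨
     ExactlyOneCross s(a₂, b₂) s(a₁, c₂) s(b₁, c₁))


/-! ### Auxiliary machinery for the proof -/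

/-- Crossing of two chords, expressed arithmetically on the underlying values. -/
def natCross (u v x y : ℕ) : Prop :=
  (min u v < min x y ∧ min x y < max u v ∧ max u v < max x y) ∨
  (min x y < min u v ∧ min u v < max x y ∧ max x y < max u v)

theorem natCross_comm₁ {u v x y : ℕ} : natCross u v x y ↔ natCross v u x y := by
  unfold natCross; omega

theorem natCross_comm₂ {u v x y : ℕ} : natCross u v x y ↔ natCross x y u v := by
  unfold natCross; omega

theorem natCross_adj {N p q r x y : ℕ}
    (hadj : p+1=q ∨ q+1=p ∨ (p+1=N ∧ q=0) ∨ (q+1=N ∧ p=0))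
    (hp : p < N) (hq : q < N) (hr : r < N) (hx : x < N) (hy : y < N)
    (hpr : p ≠ r) (hqr : q ≠ r) (hpx : p ≠ x) (hpy : p ≠ y)
    (hqx : q ≠ x) (hqy : q ≠ y) (hrx : r ≠ x) (hry : r ≠ y) :
    (natCross p r x y ↔ natCross q r x y) := by
  unfold natCross; omega

theorem natCross_flipAux {N p q r s : ℕ}
    (hadj : p+1=q ∨ q+1=p ∨ (p+1=N ∧ q=0) ∨ (q+1=N ∧ p=0))
    (hp : p < N) (hq : q < N) (hr : r < N) (hs : s < N)
    (hpq : p ≠ q) (hpr : p ≠ r) (hps : p ≠ s) (hqr : q ≠ r) (hqs : q ≠ s)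
    (hrs : r ≠ s) :
    (natCross q r p s ↔ ¬ natCross p r q s) := by
  unfold natCross; omega

theorem natCross_flip' {N p q r₁ r₂ s₁ s₂ : ℕ}
    (hpq : p+1=q ∨ q+1=p ∨ (p+1=N ∧ q=0) ∨ (q+1=N ∧ p=0))
    (hr : r₁+1=r₂ ∨ r₂+1=r₁ ∨ (r₁+1=N ∧ r₂=0) ∨ (r₂+1=N ∧ r₁=0))
    (hs : s₁+1=s₂ ∨ s₂+1=s₁ ∨ (s₁+1=N ∧ s₂=0) ∨ (s₂+1=N ∧ s₁=0))
    (bp : p < N) (bq : q < N) (br₁ : r₁ < N) (br₂ : r₂ < N) (bs₁ : s₁ < N)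
    (bs₂ : s₂ < N)
    (d1 : p ≠ q) (d2 : p ≠ r₁) (d3 : p ≠ r₂) (d4 : p ≠ s₁) (d5 : p ≠ s₂)
    (d6 : q ≠ r₁) (d7 : q ≠ r₂) (d8 : q ≠ s₁) (d9 : q ≠ s₂)
    (d10 : r₁ ≠ r₂) (d11 : r₁ ≠ s₁) (d12 : r₁ ≠ s₂)
    (d13 : r₂ ≠ s₁) (d14 : r₂ ≠ s₂) (d15 : s₁ ≠ s₂) :
    (natCross q r₂ p s₂ ↔ ¬ natCross p r₁ q s₁) := by
  have hr' : r₂+1=r₁ ∨ r₁+1=r₂ ∨ (r₂+1=N ∧ r₁=0) ∨ (r₁+1=N ∧ r₂=0) := by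
    rcases hr with hh|hh|hh|hh
    exacts [Or.inr (Or.inl hh), Or.inl hh, Or.inr (Or.inr (Or.inr hh)),
      Or.inr (Or.inr (Or.inl hh))]
  have hs' : s₂+1=s₁ ∨ s₁+1=s₂ ∨ (s₂+1=N ∧ s₁=0) ∨ (s₁+1=N ∧ s₂=0) := by
    rcases hs with hh|hh|hh|hh
    exacts [Or.inr (Or.inl hh), Or.inl hh, Or.inr (Or.inr (Or.inr hh)),
      Or.inr (Or.inr (Or.inl hh))]
  have e1 : natCross r₂ q p s₂ ↔ natCross r₁ q p s₂ :=
    natCross_adj hr' br₂ br₁ bq bp bs₂ d7.symm d6.symm d3.symm d14 d2.symm d12 d1.symm d9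
  have e2 : natCross s₂ p q r₁ ↔ natCross s₁ p q r₁ :=
    natCross_adj hs' bs₂ bs₁ bp bq br₁ d5.symm d4.symm d9.symm d12.symm d8.symm d11.symm d1 d2
  have e3 : natCross q r₁ p s₁ ↔ ¬ natCross p r₁ q s₁ :=
    natCross_flipAux hpq bp bq br₁ bs₁ d1 d2 d4 d6 d8 d11
  calc natCross q r₂ p s₂ ↔ natCross r₂ q p s₂ := natCross_comm₁
    _ ↔ natCross r₁ q p s₂ := e1
    _ ↔ natCross q r₁ p s₂ := natCross_comm₁
    _ ↔ natCross p s₂ q r₁ := natCross_comm₂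
    _ ↔ natCross s₂ p q r₁ := natCross_comm₁
    _ ↔ natCross s₁ p q r₁ := e2
    _ ↔ natCross p s₁ q r₁ := natCross_comm₁
    _ ↔ natCross q r₁ p s₁ := natCross_comm₂
    _ ↔ ¬ natCross p r₁ q s₁ := e3

theorem crosses_comm' {N : ℕ} {c d : Sym2 (Fin N)} : Crosses c d ↔ Crosses d c := by
  constructor <;> rintro ⟨a,b,x,y,h1,h2,h3,(h4|h4)⟩ <;>
    exact ⟨a,b,x,y,h1,h2,h3, by tauto⟩

theorem not_crosses_self {N : ℕ} (c : Sym2 (Fin N)) : ¬ Crosses c c := by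
  rintro ⟨a,b,x,y,h1,h2,h3,(⟨h4,h5⟩|⟨h4,h5⟩)⟩ <;>
  · rw [h4, Sym2.eq_iff] at h5
    simp only [Fin.lt_def] at h1 h2 h3
    rcases h5 with ⟨h5,h6⟩|⟨h5,h6⟩ <;> rw [Fin.ext_iff] at h5 h6 <;> omega

theorem crosses_iff {N : ℕ} {u v x y : Fin N} :
    Crosses s(u,v) s(x,y) ↔ natCross u.val v.val x.val y.val := by
  constructor
  · rintro ⟨a,b,p,q,h1,h2,h3,(⟨h4,h5⟩|⟨h4,h5⟩)⟩ <;>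
      rw [Sym2.eq_iff] at h4 h5 <;>
      simp only [Fin.lt_def] at h1 h2 h3 <;>
      unfold natCross <;>
      rcases h4 with ⟨rfl,rfl⟩|⟨rfl,rfl⟩ <;> rcases h5 with ⟨rfl,rfl⟩|⟨rfl,rfl⟩ <;> omega
  · intro h
    rcases le_total u v with huv|huv <;> rcases le_total x y with hxy'|hxy' <;>
      rw [Fin.le_def] at huv hxy' <;>
      unfold natCross at h <;>
      rcases h with ⟨h1,h2,h3⟩|⟨h1,h2,h3⟩
    · exact ⟨u,v,x,y, by rw [Fin.lt_def]; omega, by rw [Fin.lt_def]; omega,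
        by rw [Fin.lt_def]; omega, Or.inl ⟨rfl, rfl⟩⟩
    · exact ⟨x,y,u,v, by rw [Fin.lt_def]; omega, by rw [Fin.lt_def]; omega,
        by rw [Fin.lt_def]; omega, Or.inr ⟨rfl, rfl⟩⟩
    · exact ⟨u,v,y,x, by rw [Fin.lt_def]; omega, by rw [Fin.lt_def]; omega,
        by rw [Fin.lt_def]; omega, Or.inl ⟨rfl, Sym2.eq_swap⟩⟩
    · exact ⟨y,x,u,v, by rw [Fin.lt_def]; omega, by rw [Fin.lt_def]; omega,
        by rw [Fin.lt_def]; omega, Or.inr ⟨rfl, Sym2.eq_swap⟩⟩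
    · exact ⟨v,u,x,y, by rw [Fin.lt_def]; omega, by rw [Fin.lt_def]; omega,
        by rw [Fin.lt_def]; omega, Or.inl ⟨Sym2.eq_swap, rfl⟩⟩
    · exact ⟨x,y,v,u, by rw [Fin.lt_def]; omega, by rw [Fin.lt_def]; omega,
        by rw [Fin.lt_def]; omega, Or.inr ⟨Sym2.eq_swap, rfl⟩⟩
    · exact ⟨v,u,y,x, by rw [Fin.lt_def]; omega, by rw [Fin.lt_def]; omega,
        by rw [Fin.lt_def]; omega, Or.inl ⟨Sym2.eq_swap, Sym2.eq_swap⟩⟩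
    · exact ⟨y,x,v,u, by rw [Fin.lt_def]; omega, by rw [Fin.lt_def]; omega,
        by rw [Fin.lt_def]; omega, Or.inr ⟨Sym2.eq_swap, Sym2.eq_swap⟩⟩

theorem adj_val {N : ℕ} {p q : Fin N} (h : Adjacent p q) :
    p.val+1=q.val ∨ q.val+1=p.val ∨ (p.val+1=N ∧ q.val=0) ∨ (q.val+1=N ∧ p.val=0) := by
  have hp := p.isLt; have hq := q.isLt
  rcases h with h | h
  · rcases Nat.lt_or_ge (p.val+1) N with hl | hl
    · rw [Nat.mod_eq_of_lt hl] at h; omega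
    · have hN : p.val + 1 = N := by omega
      rw [hN, Nat.mod_self] at h; omega
  · rcases Nat.lt_or_ge (q.val+1) N with hl | hl
    · rw [Nat.mod_eq_of_lt hl] at h; omega
    · have hN : q.val + 1 = N := by omega
      rw [hN, Nat.mod_self] at h; omega

theorem vne {N : ℕ} {a b : Fin N} (h : a ≠ b) : a.val ≠ b.val :=
  fun hh => h (Fin.val_injective hh)

theorem crosses_move₂ {N : ℕ} {p q r s x y : Fin N}
    (hpq : Adjacent p q) (hrs : Adjacent r s)
    (dpr : p ≠ r) (dps : p ≠ s) (dqr : q ≠ r) (dqs : q ≠ s)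
    (dpx : p ≠ x) (dpy : p ≠ y) (dqx : q ≠ x) (dqy : q ≠ y)
    (drx : r ≠ x) (dry : r ≠ y) (dsx : s ≠ x) (dsy : s ≠ y) :
    Crosses s(p, r) s(x, y) ↔ Crosses s(q, s) s(x, y) := by
  rw [crosses_iff, crosses_iff]
  have e1 : natCross p.val r.val x.val y.val ↔ natCross q.val r.val x.val y.val :=
    natCross_adj (adj_val hpq) p.isLt q.isLt r.isLt x.isLt y.isLt
      (vne dpr) (vne dqr) (vne dpx) (vne dpy) (vne dqx) (vne dqy) (vne drx) (vne dry)
  have e2 : natCross r.val q.val x.val y.val ↔ natCross s.val q.val x.val y.val :=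
    natCross_adj (adj_val hrs) r.isLt s.isLt q.isLt x.isLt y.isLt
      (vne dqr.symm) (vne dqs.symm) (vne drx) (vne dry) (vne dsx) (vne dsy)
      (vne dqx) (vne dqy)
  exact e1.trans (natCross_comm₁.trans (e2.trans natCross_comm₁))

theorem crosses_flipF {N : ℕ} {p q r₁ r₂ s₁ s₂ : Fin N}
    (hpq : Adjacent p q) (hr : Adjacent r₁ r₂) (hs : Adjacent s₁ s₂)
    (d1 : p ≠ q) (d2 : p ≠ r₁) (d3 : p ≠ r₂) (d4 : p ≠ s₁) (d5 : p ≠ s₂)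
    (d6 : q ≠ r₁) (d7 : q ≠ r₂) (d8 : q ≠ s₁) (d9 : q ≠ s₂)
    (d10 : r₁ ≠ r₂) (d11 : r₁ ≠ s₁) (d12 : r₁ ≠ s₂)
    (d13 : r₂ ≠ s₁) (d14 : r₂ ≠ s₂) (d15 : s₁ ≠ s₂) :
    Crosses s(q, r₂) s(p, s₂) ↔ ¬ Crosses s(p, r₁) s(q, s₁) := by
  rw [crosses_iff, crosses_iff]
  exact natCross_flip' (adj_val hpq) (adj_val hr) (adj_val hs)
    p.isLt q.isLt r₁.isLt r₂.isLt s₁.isLt s₂.isLt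
    (vne d1) (vne d2) (vne d3) (vne d4) (vne d5) (vne d6) (vne d7) (vne d8) (vne d9)
    (vne d10) (vne d11) (vne d12) (vne d13) (vne d14) (vne d15)
/-- Theorem 2(3): a weak third move such that exactly one pair
of the three distinguished chords crosses in `D` increases the cross chord
number by exactly `1`. -/
theorem Xnum_eq_add_one_of_weakThirdMove {n : ℕ} (D D' : ChordDiagram n)
    (h : ∃ a₁ a₂ b₁ b₂ c₁ c₂, TripleMoveAt D D' a₁ a₂ b₁ b₂ c₁ c₂ ∧
      ExactlyOneCross s(a₁, b₁) s(a₂, c₁) s(b₂, c₂)) :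
    Xnum D' = Xnum D + 1 := by
  obtain ⟨a₁, a₂, b₁, b₂, c₁, c₂, ⟨hA, hB, hC, hpw, hmA, hmB, hmC, hD'⟩, hexact⟩ := h
  simp only [List.pairwise_cons, List.mem_cons, List.mem_singleton, List.not_mem_nil,
    or_false, forall_eq_or_imp, forall_eq, List.Pairwise.nil, and_true] at hpw
  obtain ⟨⟨d12, d13, d14, d15, d16⟩, ⟨d23, d24, d25, d26⟩, ⟨d34, d35, d36⟩, ⟨d45, d46⟩, d56, -⟩ := hpw
  have hA' : Adjacent a₂ a₁ := Or.symm hA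
  have hB' : Adjacent b₂ b₁ := Or.symm hB
  have hC' : Adjacent c₂ c₁ := Or.symm hC
  set σ : Equiv.Perm (Fin (2 * n)) :=
    Equiv.swap a₁ a₂ * Equiv.swap b₁ b₂ * Equiv.swap c₁ c₂ with hσdef
  -- images of the six points
  have ea₁ : σ a₁ = a₂ := by
    rw [hσdef]; simp only [Equiv.Perm.mul_apply]
    rw [Equiv.swap_apply_of_ne_of_ne d15 d16, Equiv.swap_apply_of_ne_of_ne d13 d14,
      Equiv.swap_apply_left]
  have ea₂ : σ a₂ = a₁ := by
    rw [hσdef]; simp only [Equiv.Perm.mul_apply]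
    rw [Equiv.swap_apply_of_ne_of_ne d25 d26, Equiv.swap_apply_of_ne_of_ne d23 d24,
      Equiv.swap_apply_right]
  have eb₁ : σ b₁ = b₂ := by
    rw [hσdef]; simp only [Equiv.Perm.mul_apply]
    rw [Equiv.swap_apply_of_ne_of_ne d35 d36, Equiv.swap_apply_left,
      Equiv.swap_apply_of_ne_of_ne d14.symm d24.symm]
  have eb₂ : σ b₂ = b₁ := by
    rw [hσdef]; simp only [Equiv.Perm.mul_apply]
    rw [Equiv.swap_apply_of_ne_of_ne d45 d46, Equiv.swap_apply_right,
      Equiv.swap_apply_of_ne_of_ne d13.symm d23.symm]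
  have ec₁ : σ c₁ = c₂ := by
    rw [hσdef]; simp only [Equiv.Perm.mul_apply]
    rw [Equiv.swap_apply_left, Equiv.swap_apply_of_ne_of_ne d36.symm d46.symm,
      Equiv.swap_apply_of_ne_of_ne d16.symm d26.symm]
  have ec₂ : σ c₂ = c₁ := by
    rw [hσdef]; simp only [Equiv.Perm.mul_apply]
    rw [Equiv.swap_apply_right, Equiv.swap_apply_of_ne_of_ne d35.symm d45.symm,
      Equiv.swap_apply_of_ne_of_ne d15.symm d25.symm]
  have efix : ∀ x : Fin (2 * n),
      x ≠ a₁ → x ≠ a₂ → x ≠ b₁ → x ≠ b₂ → x ≠ c₁ → x ≠ c₂ → σ x = x := by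
    intro x h1 h2 h3 h4 h5 h6
    rw [hσdef]; simp only [Equiv.Perm.mul_apply]
    rw [Equiv.swap_apply_of_ne_of_ne h5 h6, Equiv.swap_apply_of_ne_of_ne h3 h4,
      Equiv.swap_apply_of_ne_of_ne h1 h2]
  -- images of the three distinguished chords
  have hFA : Sym2.map (⇑σ) s(a₁, b₁) = s(a₂, b₂) := by rw [Sym2.map_pair_eq, ea₁, eb₁]
  have hFB : Sym2.map (⇑σ) s(a₂, c₁) = s(a₁, c₂) := by rw [Sym2.map_pair_eq, ea₂, ec₁]
  have hFC : Sym2.map (⇑σ) s(b₂, c₂) = s(b₁, c₁) := by rw [Sym2.map_pair_eq, eb₂, ec₂]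
  -- any point lies on a unique chord
  have huniq : ∀ (x : Fin (2 * n)) (p q : Sym2 (Fin (2 * n))), p ∈ D.chords →
      q ∈ D.chords → x ∈ p → x ∈ q → p = q := by
    intro x p q hp hq hxp hxq
    obtain ⟨c, -, hu⟩ := D.cover x
    rw [hu p ⟨hp, hxp⟩, hu q ⟨hq, hxq⟩]
  -- endpoints of non-distinguished chords avoid the six points
  have hend : ∀ p ∈ D.chords, p ≠ s(a₁, b₁) → p ≠ s(a₂, c₁) → p ≠ s(b₂, c₂) →
      ∀ x ∈ p, x ≠ a₁ ∧ x ≠ a₂ ∧ x ≠ b₁ ∧ x ≠ b₂ ∧ x ≠ c₁ ∧ x ≠ c₂ := by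
    intro p hp h1 h2 h3 x hx
    have mk : ∀ (y : Fin (2 * n)) (q : Sym2 (Fin (2 * n))), q ∈ D.chords → y ∈ q →
        x = y → p = q := fun y q hq hyq hxy => huniq y p q hp hq (hxy ▸ hx) hyq
    exact ⟨fun e => h1 (mk a₁ s(a₁, b₁) hmA (by simp) e),
      fun e => h2 (mk a₂ s(a₂, c₁) hmB (by simp) e),
      fun e => h1 (mk b₁ s(a₁, b₁) hmA (by simp) e),
      fun e => h3 (mk b₂ s(b₂, c₂) hmC (by simp) e),
      fun e => h2 (mk c₁ s(a₂, c₁) hmB (by simp) e),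
      fun e => h3 (mk c₂ s(b₂, c₂) hmC (by simp) e)⟩
  -- non-distinguished chords are fixed
  have hfixchord : ∀ p ∈ D.chords, p ≠ s(a₁, b₁) → p ≠ s(a₂, c₁) → p ≠ s(b₂, c₂) →
      Sym2.map (⇑σ) p = p := by
    intro p hp h1 h2 h3
    obtain ⟨x, y, rfl⟩ : ∃ x y, p = s(x, y) := ⟨p.out.1, p.out.2, by simp [Sym2.mk]⟩
    obtain ⟨e1, e2, e3, e4, e5, e6⟩ := hend _ hp h1 h2 h3 x (by simp)
    obtain ⟨f1, f2, f3, f4, f5, f6⟩ := hend _ hp h1 h2 h3 y (by simp)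
    rw [Sym2.map_pair_eq, efix x e1 e2 e3 e4 e5 e6, efix y f1 f2 f3 f4 f5 f6]
  -- the three distinguished chords are pairwise distinct
  have hABne : s(a₁, b₁) ≠ s(a₂, c₁) := by
    intro e; rw [Sym2.eq_iff] at e
    rcases e with ⟨e1, -⟩ | ⟨e1, -⟩
    exacts [d12 e1, d15 e1]
  have hACne : s(a₁, b₁) ≠ s(b₂, c₂) := by
    intro e; rw [Sym2.eq_iff] at e
    rcases e with ⟨e1, -⟩ | ⟨e1, -⟩
    exacts [d14 e1, d16 e1]
  have hBCne : s(a₂, c₁) ≠ s(b₂, c₂) := by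
    intro e; rw [Sym2.eq_iff] at e
    rcases e with ⟨e1, -⟩ | ⟨e1, -⟩
    exacts [d24 e1, d26 e1]
  -- crossings with non-distinguished chords are preserved
  have hkey : ∀ u ∈ D.chords, ∀ v ∈ D.chords,
      v ≠ s(a₁, b₁) → v ≠ s(a₂, c₁) → v ≠ s(b₂, c₂) →
      (Crosses (Sym2.map (⇑σ) u) (Sym2.map (⇑σ) v) ↔ Crosses u v) := by
    intro u hu v hv hv1 hv2 hv3
    rw [hfixchord v hv hv1 hv2 hv3]
    by_cases hu1 : u = s(a₁, b₁)
    · subst hu1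
      rw [hFA]
      obtain ⟨x, y, rfl⟩ : ∃ x y, v = s(x, y) := ⟨v.out.1, v.out.2, by simp [Sym2.mk]⟩
      obtain ⟨e1, e2, e3, e4, e5, e6⟩ := hend _ hv hv1 hv2 hv3 x (by simp)
      obtain ⟨f1, f2, f3, f4, f5, f6⟩ := hend _ hv hv1 hv2 hv3 y (by simp)
      exact crosses_move₂ hA' hB' d24 d23 d14 d13 e2.symm f2.symm e1.symm f1.symm
        e4.symm f4.symm e3.symm f3.symm
    by_cases hu2 : u = s(a₂, c₁)
    · subst hu2
      rw [hFB]
      obtain ⟨x, y, rfl⟩ : ∃ x y, v = s(x, y) := ⟨v.out.1, v.out.2, by simp [Sym2.mk]⟩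
      obtain ⟨e1, e2, e3, e4, e5, e6⟩ := hend _ hv hv1 hv2 hv3 x (by simp)
      obtain ⟨f1, f2, f3, f4, f5, f6⟩ := hend _ hv hv1 hv2 hv3 y (by simp)
      exact crosses_move₂ hA hC' d16 d15 d26 d25 e1.symm f1.symm e2.symm f2.symm
        e6.symm f6.symm e5.symm f5.symm
    by_cases hu3 : u = s(b₂, c₂)
    · subst hu3
      rw [hFC]
      obtain ⟨x, y, rfl⟩ : ∃ x y, v = s(x, y) := ⟨v.out.1, v.out.2, by simp [Sym2.mk]⟩
      obtain ⟨e1, e2, e3, e4, e5, e6⟩ := hend _ hv hv1 hv2 hv3 x (by simp)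
      obtain ⟨f1, f2, f3, f4, f5, f6⟩ := hend _ hv hv1 hv2 hv3 y (by simp)
      exact crosses_move₂ hB hC d35 d36 d45 d46 e3.symm f3.symm e4.symm f4.symm
        e5.symm f5.symm e6.symm f6.symm
    · rw [hfixchord u hu hu1 hu2 hu3]
  -- the three pairwise crossings all flip
  have flip1 : Crosses s(a₂, b₂) s(a₁, c₂) ↔ ¬ Crosses s(a₁, b₁) s(a₂, c₁) :=
    crosses_flipF hA hB hC d12 d13 d14 d15 d16 d23 d24 d25 d26 d34 d35 d36 d45 d46 d56
  have flip2 : Crosses s(a₂, b₂) s(b₁, c₁) ↔ ¬ Crosses s(a₁, b₁) s(b₂, c₂) := by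
    have h2 := crosses_flipF (p := b₁) (q := b₂) (r₁ := a₁) (r₂ := a₂) (s₁ := c₂) (s₂ := c₁)
      hB hA hC' d34 d13.symm d23.symm d36 d35 d14.symm d24.symm d46 d45 d12 d16 d15 d26 d25
      d56.symm
    rwa [show s(b₂, a₂) = s(a₂, b₂) from Sym2.eq_swap,
      show s(b₁, a₁) = s(a₁, b₁) from Sym2.eq_swap] at h2
  have flip3 : Crosses s(a₁, c₂) s(b₁, c₁) ↔ ¬ Crosses s(a₂, c₁) s(b₂, c₂) := by
    have h3 := crosses_flipF (p := c₁) (q := c₂) (r₁ := a₂) (r₂ := a₁) (s₁ := b₂) (s₂ := b₁)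
      hC hA' hB' d56 d25.symm d15.symm d45.symm d35.symm d26.symm d16.symm d46.symm d36.symm
      d12.symm d24 d23 d14 d13 d34.symm
    rwa [show s(c₂, a₁) = s(a₁, c₂) from Sym2.eq_swap,
      show s(c₁, b₁) = s(b₁, c₁) from Sym2.eq_swap,
      show s(c₁, a₂) = s(a₂, c₁) from Sym2.eq_swap,
      show s(c₂, b₂) = s(b₂, c₂) from Sym2.eq_swap] at h3
  -- counting
  have hFinj : Function.Injective (Sym2.map (⇑σ)) := Sym2.map.injective σ.injective
  have hprodim : D'.chords ×ˢ D'.chords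
      = (D.chords ×ˢ D.chords).image (Prod.map (Sym2.map (⇑σ)) (Sym2.map (⇑σ))) := by
    rw [hD']
    ext ⟨u, v⟩
    simp only [Finset.mem_product, Finset.mem_image, Prod.map, Prod.exists, Prod.mk.injEq]
    constructor
    · rintro ⟨⟨x, hx, rfl⟩, ⟨y, hy, rfl⟩⟩
      exact ⟨x, y, ⟨hx, hy⟩, rfl, rfl⟩
    · rintro ⟨x, y, ⟨hx, hy⟩, rfl, rfl⟩
      exact ⟨⟨x, hx, rfl⟩, ⟨y, hy, rfl⟩⟩
  have hcard1 : ((D'.chords ×ˢ D'.chords).filter fun p => Crosses p.1 p.2).card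
      = ((D.chords ×ˢ D.chords).filter
          fun p => Crosses (Sym2.map (⇑σ) p.1) (Sym2.map (⇑σ) p.2)).card := by
    rw [hprodim, Finset.filter_image, Finset.card_image_of_injective _ (hFinj.prodMap hFinj)]
    congr 1
  set T : Finset (Sym2 (Fin (2 * n))) := {s(a₁, b₁), s(a₂, c₁), s(b₂, c₂)} with hT
  have hTsub : T ⊆ D.chords := by
    intro z hz
    rw [hT] at hz
    simp only [Finset.mem_insert, Finset.mem_singleton] at hz
    rcases hz with rfl | rfl | rfl <;> assumption
  have hsplit : ∀ P : Sym2 (Fin (2 * n)) × Sym2 (Fin (2 * n)) → Prop,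
      ((D.chords ×ˢ D.chords).filter P).card
        = (((D.chords ×ˢ D.chords) \ (T ×ˢ T)).filter P).card + ((T ×ˢ T).filter P).card := by
    intro P
    rw [← Finset.card_union_of_disjoint (Finset.disjoint_filter_filter Finset.sdiff_disjoint),
      ← Finset.filter_union,
      Finset.sdiff_union_of_subset (Finset.product_subset_product hTsub hTsub)]
  have hoffeq : (((D.chords ×ˢ D.chords) \ (T ×ˢ T)).filter
        fun p => Crosses (Sym2.map (⇑σ) p.1) (Sym2.map (⇑σ) p.2))
      = ((D.chords ×ˢ D.chords) \ (T ×ˢ T)).filter fun p => Crosses p.1 p.2 := by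
    refine Finset.filter_congr ?_
    rintro ⟨u, v⟩ hm
    rw [Finset.mem_sdiff, Finset.mem_product, Finset.mem_product] at hm
    obtain ⟨⟨hu, hv⟩, hnot⟩ := hm
    by_cases hvT : v ∈ T
    · have huT : u ∉ T := fun hh => hnot ⟨hh, hvT⟩
      have hu1 : u ≠ s(a₁, b₁) := fun e => huT (by rw [hT, e]; simp)
      have hu2 : u ≠ s(a₂, c₁) := fun e => huT (by rw [hT, e]; simp)
      have hu3 : u ≠ s(b₂, c₂) := fun e => huT (by rw [hT, e]; simp)
      rw [crosses_comm' (c := Sym2.map (⇑σ) u), crosses_comm' (c := u)]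
      exact hkey v hv u hu hu1 hu2 hu3
    · have hv1 : v ≠ s(a₁, b₁) := fun e => hvT (by rw [hT, e]; simp)
      have hv2 : v ≠ s(a₂, c₁) := fun e => hvT (by rw [hT, e]; simp)
      have hv3 : v ≠ s(b₂, c₂) := fun e => hvT (by rw [hT, e]; simp)
      exact hkey u hu v hv hv1 hv2 hv3
  have hsum3 : ∀ f : Sym2 (Fin (2 * n)) → ℕ,
      (∑ z ∈ T, f z) = f s(a₁, b₁) + f s(a₂, c₁) + f s(b₂, c₂) := by
    intro f
    rw [hT, Finset.sum_insert (by simp [hABne, hACne]),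
      Finset.sum_insert (by simp [hBCne]), Finset.sum_singleton]
    omega
  have hcount : ∀ P : Sym2 (Fin (2 * n)) × Sym2 (Fin (2 * n)) → Prop,
      ((T ×ˢ T).filter P).card
        = ((if P (s(a₁, b₁), s(a₁, b₁)) then 1 else 0)
            + (if P (s(a₁, b₁), s(a₂, c₁)) then 1 else 0)
            + (if P (s(a₁, b₁), s(b₂, c₂)) then 1 else 0))
          + ((if P (s(a₂, c₁), s(a₁, b₁)) then 1 else 0)
            + (if P (s(a₂, c₁), s(a₂, c₁)) then 1 else 0)
            + (if P (s(a₂, c₁), s(b₂, c₂)) then 1 else 0))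
          + ((if P (s(b₂, c₂), s(a₁, b₁)) then 1 else 0)
            + (if P (s(b₂, c₂), s(a₂, c₁)) then 1 else 0)
            + (if P (s(b₂, c₂), s(b₂, c₂)) then 1 else 0)) := by
    intro P
    rw [Finset.card_filter, Finset.sum_product, hsum3, hsum3, hsum3, hsum3]
  unfold ExactlyOneCross at hexact
  have final : ∀ m : ℕ, Xnum D' = (m + 4) / 2 → Xnum D = (m + 2) / 2 →
      Xnum D' = Xnum D + 1 := by intro m h1 h2; rw [h1, h2]; omega
  rcases hexact with ⟨ho1, ho2, ho3⟩ | ⟨ho1, ho2, ho3⟩ | ⟨ho1, ho2, ho3⟩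
  · have hn1 : ¬ Crosses s(a₂, b₂) s(a₁, c₂) := fun hc => flip1.mp hc ho1
    have hn2 : Crosses s(a₂, b₂) s(b₁, c₁) := flip2.mpr ho2
    have hn3 : Crosses s(a₁, c₂) s(b₁, c₁) := flip3.mpr ho3
    have ho1' : Crosses s(a₂, c₁) s(a₁, b₁) := crosses_comm'.mp ho1
    have ho2' : ¬ Crosses s(b₂, c₂) s(a₁, b₁) := fun e => ho2 (crosses_comm'.mp e)
    have ho3' : ¬ Crosses s(b₂, c₂) s(a₂, c₁) := fun e => ho3 (crosses_comm'.mp e)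
    have hn1' : ¬ Crosses s(a₁, c₂) s(a₂, b₂) := fun e => hn1 (crosses_comm'.mp e)
    have hn2' : Crosses s(b₁, c₁) s(a₂, b₂) := crosses_comm'.mp hn2
    have hn3' : Crosses s(b₁, c₁) s(a₁, c₂) := crosses_comm'.mp hn3
    have ctP : ((T ×ˢ T).filter
        fun p => Crosses (Sym2.map (⇑σ) p.1) (Sym2.map (⇑σ) p.2)).card = 4 := by
      rw [hcount]
      simp [hFA, hFB, hFC, not_crosses_self, hn1, hn2, hn3, hn1', hn2', hn3']
    have ctQ : ((T ×ˢ T).filter fun p => Crosses p.1 p.2).card = 2 := by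
      rw [hcount]
      simp [not_crosses_self, ho1, ho2, ho3, ho1', ho2', ho3']
    refine final (((D.chords ×ˢ D.chords) \ (T ×ˢ T)).filter
        fun p => Crosses p.1 p.2).card ?_ ?_
    · show ((D'.chords ×ˢ D'.chords).filter fun p => Crosses p.1 p.2).card / 2 = _
      rw [hcard1, hsplit, hoffeq, ctP]
    · show ((D.chords ×ˢ D.chords).filter fun p => Crosses p.1 p.2).card / 2 = _
      rw [hsplit, ctQ]
  · have hn1 : Crosses s(a₂, b₂) s(a₁, c₂) := flip1.mpr ho1
    have hn2 : ¬ Crosses s(a₂, b₂) s(b₁, c₁) := fun hc => flip2.mp hc ho2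
    have hn3 : Crosses s(a₁, c₂) s(b₁, c₁) := flip3.mpr ho3
    have ho1' : ¬ Crosses s(a₂, c₁) s(a₁, b₁) := fun e => ho1 (crosses_comm'.mp e)
    have ho2' : Crosses s(b₂, c₂) s(a₁, b₁) := crosses_comm'.mp ho2
    have ho3' : ¬ Crosses s(b₂, c₂) s(a₂, c₁) := fun e => ho3 (crosses_comm'.mp e)
    have hn1' : Crosses s(a₁, c₂) s(a₂, b₂) := crosses_comm'.mp hn1
    have hn2' : ¬ Crosses s(b₁, c₁) s(a₂, b₂) := fun e => hn2 (crosses_comm'.mp e)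
    have hn3' : Crosses s(b₁, c₁) s(a₁, c₂) := crosses_comm'.mp hn3
    have ctP : ((T ×ˢ T).filter
        fun p => Crosses (Sym2.map (⇑σ) p.1) (Sym2.map (⇑σ) p.2)).card = 4 := by
      rw [hcount]
      simp [hFA, hFB, hFC, not_crosses_self, hn1, hn2, hn3, hn1', hn2', hn3']
    have ctQ : ((T ×ˢ T).filter fun p => Crosses p.1 p.2).card = 2 := by
      rw [hcount]
      simp [not_crosses_self, ho1, ho2, ho3, ho1', ho2', ho3']
    refine final (((D.chords ×ˢ D.chords) \ (T ×ˢ T)).filter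
        fun p => Crosses p.1 p.2).card ?_ ?_
    · show ((D'.chords ×ˢ D'.chords).filter fun p => Crosses p.1 p.2).card / 2 = _
      rw [hcard1, hsplit, hoffeq, ctP]
    · show ((D.chords ×ˢ D.chords).filter fun p => Crosses p.1 p.2).card / 2 = _
      rw [hsplit, ctQ]
  · have hn1 : Crosses s(a₂, b₂) s(a₁, c₂) := flip1.mpr ho1
    have hn2 : Crosses s(a₂, b₂) s(b₁, c₁) := flip2.mpr ho2
    have hn3 : ¬ Crosses s(a₁, c₂) s(b₁, c₁) := fun hc => flip3.mp hc ho3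
    have ho1' : ¬ Crosses s(a₂, c₁) s(a₁, b₁) := fun e => ho1 (crosses_comm'.mp e)
    have ho2' : ¬ Crosses s(b₂, c₂) s(a₁, b₁) := fun e => ho2 (crosses_comm'.mp e)
    have ho3' : Crosses s(b₂, c₂) s(a₂, c₁) := crosses_comm'.mp ho3
    have hn1' : Crosses s(a₁, c₂) s(a₂, b₂) := crosses_comm'.mp hn1
    have hn2' : Crosses s(b₁, c₁) s(a₂, b₂) := crosses_comm'.mp hn2
    have hn3' : ¬ Crosses s(b₁, c₁) s(a₁, c₂) := fun e => hn3 (crosses_comm'.mp e)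
    have ctP : ((T ×ˢ T).filter
        fun p => Crosses (Sym2.map (⇑σ) p.1) (Sym2.map (⇑σ) p.2)).card = 4 := by
      rw [hcount]
      simp [hFA, hFB, hFC, not_crosses_self, hn1, hn2, hn3, hn1', hn2', hn3']
    have ctQ : ((T ×ˢ T).filter fun p => Crosses p.1 p.2).card = 2 := by
      rw [hcount]
      simp [not_crosses_self, ho1, ho2, ho3, ho1', ho2', ho3']
    refine final (((D.chords ×ˢ D.chords) \ (T ×ˢ T)).filter
        fun p => Crosses p.1 p.2).card ?_ ?_
    · show ((D'.chords ×ˢ D'.chords).filter fun p => Crosses p.1 p.2).card / 2 = _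
      rw [hcard1, hsplit, hoffeq, ctP]
    · show ((D.chords ×ˢ D.chords).filter fun p => Crosses p.1 p.2).card / 2 = _
      rw [hsplit, ctQ]
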